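/- Let d = K·M with blocks B_1,…,B_K, let μ be a measure on ℂ^d whose pushforward under η_{B_k} equals μ for every k = 1,…,K, and let g : ℂ^d → ℝ satisfy g(η_{B_k}(ξ)) = g(ξ) for all ξ and all k. Assume that for all indices i, j the function ξ ↦ ξ_i·conj(ξ_j)·g(ξ) is μ-integrable. Then the matrix Q with entries Q_{ij} = ∫ ξ_i·conj(ξ_j)·g(ξ) dμ(ξ) is block-diagonal: Q_{ij} = 0 whenever i and j lie in different blocks. -/

import Mathlib

open MeasureTheory Matrix
open scoped ComplexOrder

noncomputable section

/-- Circularly-symmetric complex Gaussian density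
`φ_A(ξ) = π^{-d} (det A)^{-1} exp(-ξ^H A^{-1} ξ)` on `ℂ^ι`. -/
def gaussDensity {ι : Type*} [Fintype ι] [DecidableEq ι] (A : Matrix ι ι ℂ) (ξ : ι → ℂ) : ℂ :=
  ((Real.pi : ℂ) ^ (Fintype.card ι))⁻¹ * (A.det)⁻¹ *
    Complex.exp (-(star ξ ⬝ᵥ (A⁻¹ *ᵥ ξ)))

/-- The complex Gaussian measure `N_ℂ(0, A)` on `ℂ^ι`, i.e. the measure whose density with
respect to Lebesgue measure on `ℂ^ι ≅ ℝ^{2d}` is `φ_A`. -/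
def gaussMeasure {ι : Type*} [Fintype ι] [DecidableEq ι] (A : Matrix ι ι ℂ) :
    Measure (ι → ℂ) :=
  volume.withDensity fun ξ => ENNReal.ofReal (gaussDensity A ξ).re

/-- Bernoulli–Gaussian measure `(1-ε)·δ_0 + ε·N_ℂ(0, A)`. -/
def bgMeasure {ι : Type*} [Fintype ι] [DecidableEq ι] (A : Matrix ι ι ℂ) (ε : ℝ) :
    Measure (ι → ℂ) :=
  ENNReal.ofReal (1 - ε) • Measure.dirac 0 + ENNReal.ofReal ε • gaussMeasure A

/-- Scalar factor `θ(ξ) = (1 + ((1-ε)/ε)·(det(R+Σ)/det Σ)·exp(-ξ^H Ω ξ))⁻¹` of the MMSE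
denoiser, with `Ω = Σ⁻¹ - (R+Σ)⁻¹`. -/
def mmseTheta {ι : Type*} [Fintype ι] [DecidableEq ι] (R S : Matrix ι ι ℂ) (ε : ℝ)
    (ξ : ι → ℂ) : ℂ :=
  (1 + (((1 - ε) / ε : ℝ) : ℂ) * ((R + S).det / S.det) *
      Complex.exp (-(star ξ ⬝ᵥ ((S⁻¹ - (R + S)⁻¹) *ᵥ ξ))))⁻¹

/-- MMSE denoiser `g(ξ) = θ(ξ)·R(R+Σ)⁻¹ξ`. -/
def mmseDenoiser {ι : Type*} [Fintype ι] [DecidableEq ι] (R S : Matrix ι ι ℂ) (ε : ℝ)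
    (ξ : ι → ℂ) : ι → ℂ :=
  mmseTheta R S ε ξ • ((R * (R + S)⁻¹) *ᵥ ξ)

open Classical in
/-- `η_I` : sign flip of the coordinates with indices in `I`. -/
def etaFlip {ι : Type*} (I : Set ι) (ξ : ι → ℂ) : ι → ℂ :=
  fun i => if i ∈ I then -ξ i else ξ i

/-- `k`-th `M × M` diagonal block of a matrix indexed by `Fin K × Fin M`
(block `B_k = {k} × Fin M`). -/
def blk {K M : ℕ} (A : Matrix (Fin K × Fin M) (Fin K × Fin M) ℂ) (k : Fin K) :
    Matrix (Fin M) (Fin M) ℂ :=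
  Matrix.of fun a b => A (k, a) (k, b)

lemma etaFlip_measurable' {ι : Type*} (I : Set ι) :
    Measurable (etaFlip (ι := ι) I) := by
  apply measurable_pi_lambda
  intro i
  unfold etaFlip
  by_cases h : i ∈ I
  · simp only [if_pos h]; exact (measurable_pi_apply i).neg
  · simp only [if_neg h]; exact measurable_pi_apply i

/-- If `μ` is invariant under the block sign flips `η_{B_k}` and
`g : ℂ^d → ℝ` satisfies `g ∘ η_{B_k} = g` for every block `B_k = {k} × Fin M`, and all
entry integrands `ξ ↦ ξᵢ·conj(ξⱼ)·g(ξ)` are `μ`-integrable, then the matrix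
`Q_{ij} = ∫ ξᵢ·conj(ξⱼ)·g(ξ) dμ` is block-diagonal. -/
theorem stmt7 (K M : ℕ) (μ : Measure ((Fin K × Fin M) → ℂ))
    (hμ : ∀ k : Fin K, Measure.map (etaFlip {i : Fin K × Fin M | i.1 = k}) μ = μ)
    (g : ((Fin K × Fin M) → ℂ) → ℝ)
    (hg : ∀ (k : Fin K) (ξ : (Fin K × Fin M) → ℂ),
      g (etaFlip {i : Fin K × Fin M | i.1 = k} ξ) = g ξ)
    (hint : ∀ i j : Fin K × Fin M,
      Integrable (fun ξ : (Fin K × Fin M) → ℂ => ξ i * star (ξ j) * (g ξ : ℂ)) μ) :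
    ∀ i j : Fin K × Fin M, i.1 ≠ j.1 →
      (∫ ξ : (Fin K × Fin M) → ℂ, ξ i * star (ξ j) * (g ξ : ℂ) ∂μ) = 0 := by
  intro i j hij
  set k := i.1
  set η := etaFlip {i : Fin K × Fin M | i.1 = k} with hη
  set f : ((Fin K × Fin M) → ℂ) → ℂ := fun ξ => ξ i * star (ξ j) * (g ξ : ℂ) with hf
  have hmeas : Measurable η := etaFlip_measurable' _
  have hsm : AEStronglyMeasurable f (Measure.map η μ) := by
    rw [hμ k]; exact (hint i j).1
  have h1 : ∫ ξ, f ξ ∂μ = ∫ ξ, f (η ξ) ∂μ := by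
    conv_lhs => rw [← hμ k]
    exact integral_map hmeas.aemeasurable hsm
  have h2 : ∀ ξ, f (η ξ) = - f ξ := by
    intro ξ
    have hi : η ξ i = -ξ i := by simp [hη, etaFlip, k]
    have hj : η ξ j = ξ j := by simp [hη, etaFlip, Ne.symm hij]
    have hgξ : g (η ξ) = g ξ := hg k ξ
    simp only [hf, hi, hj, hgξ]
    ring
  have h4 : ∫ ξ, f (η ξ) ∂μ = - ∫ ξ, f ξ ∂μ := by
    simp_rw [h2]; exact integral_neg f
  have h3 : ∫ ξ, f ξ ∂μ = - ∫ ξ, f ξ ∂μ := h1.trans h4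
  linear_combination h3 / 2

end
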